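/- Let n∈ℤ, write ⟨n⟩ = 2+|n|, and let ω≥0 be locally integrable on ℝ. There is an absolute constant C such that for every λ>0 and every f∈L¹_loc(ℝ), ω({x∈ℝ : M^{(n)} f(x) > λ}) ≤ C λ^{−1} ( log⟨n⟩ ∫_ℝ |f(x)| M^{(−n)}ω(x) dx + ∫_ℝ |f(x)| Mω(x) dx ), where M denotes the Hardy–Littlewood maximal operator and ω(E)=∫_E ω. -/

import Mathlib

open MeasureTheory Set ENNReal

/-- The shifted dyadic maximal operator `M^{(n)} f(x) = sup_{x ∈ I ∈ 𝒟} |I|⁻¹ ∫_{I^{(n)}} |f|`,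
where `𝒟` is the collection of dyadic intervals `I = [2^k m, 2^k(m+1))` and
`I^{(n)} = [2^k(m−n), 2^k(m−n+1))`. -/
noncomputable def shiftedMaximal (n : ℤ) (f : ℝ → ℝ) (x : ℝ) : ℝ≥0∞ :=
  ⨆ (k : ℤ) (m : ℤ)
    (_ : x ∈ Set.Ico ((2 : ℝ) ^ k * (m : ℝ)) ((2 : ℝ) ^ k * ((m : ℝ) + 1))),
    ENNReal.ofReal (((2 : ℝ) ^ k)⁻¹ *
      ∫ y in Set.Ico ((2 : ℝ) ^ k * ((m : ℝ) - (n : ℝ)))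
          ((2 : ℝ) ^ k * ((m : ℝ) - (n : ℝ) + 1)), |f y|)

/-- The Hardy–Littlewood maximal operator `Mf(x) = sup_{x ∈ I} |I|⁻¹ ∫_I |f|`, the supremum
being over all bounded intervals `I` containing `x`. -/
noncomputable def hlMaximal (f : ℝ → ℝ) (x : ℝ) : ℝ≥0∞ :=
  ⨆ (a : ℝ) (b : ℝ) (_ : a ≤ x) (_ : x ≤ b) (_ : a < b),
    ENNReal.ofReal ((b - a)⁻¹ * ∫ y in Set.Icc a b, |f y|)

namespace S11

noncomputable section

def E (k m : ℤ) : Set ℝ := Set.Ico ((2:ℝ)^k * m) ((2:ℝ)^k * (m+1))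

lemma two_zpow_pos (k : ℤ) : (0:ℝ) < (2:ℝ)^k := zpow_pos (by norm_num) k

lemma mem_E_iff {k m : ℤ} {x : ℝ} : x ∈ E k m ↔ ⌊x / (2:ℝ)^k⌋ = m := by
  have hp := two_zpow_pos k
  rw [E, Set.mem_Ico, Int.floor_eq_iff]
  constructor
  · rintro ⟨h1, h2⟩
    refine ⟨by rwa [le_div_iff₀ hp, mul_comm], ?_⟩
    rw [div_lt_iff₀ hp]
    linarith
  · rintro ⟨h1, h2⟩
    rw [le_div_iff₀ hp] at h1
    rw [div_lt_iff₀ hp] at h2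
    constructor <;> linarith

lemma E_disjoint {k m m' : ℤ} (h : m ≠ m') : Disjoint (E k m) (E k m') := by
  rw [Set.disjoint_left]
  intro x hx hx'
  rw [mem_E_iff] at hx hx'
  exact h (hx ▸ hx')

lemma E_nonempty (k m : ℤ) : ((2:ℝ)^k * m) < ((2:ℝ)^k * (m+1)) := by
  have hp := two_zpow_pos k
  nlinarith

lemma E_subset {k k' m m' : ℤ} (hk : k ≤ k') {x : ℝ} (hx : x ∈ E k m) (hx' : x ∈ E k' m') :
    E k m ⊆ E k' m' := by
  have hp := two_zpow_pos k
  have hp' := two_zpow_pos k'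
  obtain ⟨d, hd⟩ : ∃ d : ℕ, k' = k + d := ⟨(k' - k).toNat, by omega⟩
  have h2 : (2:ℝ)^k' = (2:ℝ)^k * (2:ℝ)^(d:ℕ) := by
    rw [hd, zpow_add₀ (by norm_num : (2:ℝ) ≠ 0), zpow_natCast]
  have h2' : ((2:ℝ))^(d:ℕ) = ((2^d : ℤ) : ℝ) := by push_cast; ring
  obtain ⟨ha1, ha2⟩ := hx
  obtain ⟨hb1, hb2⟩ := hx'
  -- claim: 2^d * m' ≤ m and m + 1 ≤ 2^d * (m' + 1)  in ℤ
  have key1 : (2^d : ℤ) * m' ≤ m := by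
    have : (2:ℝ)^k * ((2^d : ℤ) * m' : ℤ) ≤ x := by push_cast; rw [h2, h2'] at hb1; push_cast at hb1; nlinarith [hb1]
    have hlt : (2:ℝ)^k * ((2^d : ℤ) * m' : ℤ) < (2:ℝ)^k * (m+1) := lt_of_le_of_lt this ha2
    have : ((2^d : ℤ) * m' : ℝ) < (m : ℝ) + 1 := by
      have := (mul_lt_mul_iff_right₀ hp).mp hlt
      push_cast at this ⊢; linarith
    have : ((2^d : ℤ) * m' : ℤ) < m + 1 := by exact_mod_cast this
    omega
  have key2 : m + 1 ≤ (2^d : ℤ) * (m' + 1) := by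
    have hlt : (2:ℝ)^k * m < (2:ℝ)^k * ((2^d : ℤ) * (m'+1) : ℤ) := by
      refine lt_of_le_of_lt ha1 ?_
      rw [h2, h2'] at hb2; push_cast at hb2 ⊢; nlinarith [hb2]
    have : (m:ℝ) < ((2^d : ℤ) * (m'+1) : ℤ) := by
      have := (mul_lt_mul_iff_right₀ hp).mp hlt
      exact_mod_cast this
    have : m < (2^d : ℤ) * (m' + 1) := by exact_mod_cast this
    omega
  intro y hy
  obtain ⟨hy1, hy2⟩ := hy
  constructor
  · rw [h2]
    calc (2:ℝ)^k * (2:ℝ)^(d:ℕ) * m' ≤ (2:ℝ)^k * m := by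
          rw [h2']; push_cast
          have : ((2:ℝ)^d * m' : ℝ) ≤ m := by exact_mod_cast (by exact_mod_cast key1 : ((2^d : ℤ) * m' : ℝ) ≤ (m:ℝ))
          nlinarith [this, hp]
      _ ≤ y := hy1
  · rw [h2]
    calc y < (2:ℝ)^k * (m+1) := hy2
      _ ≤ (2:ℝ)^k * (2:ℝ)^(d:ℕ) * (m'+1) := by
          rw [h2']
          have : ((m:ℝ) + 1) ≤ ((2^d : ℤ) : ℝ) * ((m':ℝ)+1) := by exact_mod_cast (by push_cast; exact_mod_cast key2 : ((m:ℝ)+1) ≤ ((2^d : ℤ) * (m'+1) : ℝ))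
          nlinarith [this, hp]

def Good (f : ℝ → ℝ) (lam : ℝ) (k m : ℤ) : Prop :=
  lam * (2:ℝ)^k < ∫ y in E k m, |f y|

/-- maximal good dyadic intervals of scale at most `K` -/
def MaxG (f : ℝ → ℝ) (lam : ℝ) (K : ℤ) (k m : ℤ) : Prop :=
  k ≤ K ∧ Good f lam k m ∧
    ∀ k' m', k < k' → k' ≤ K → E k m ⊆ E k' m' → ¬ Good f lam k' m'

lemma exists_max {f : ℝ → ℝ} {lam : ℝ} {K k m : ℤ} (hk : k ≤ K) (hg : Good f lam k m) :
    ∃ k' m', MaxG f lam K k' m' ∧ k ≤ k' ∧ E k m ⊆ E k' m' := by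
  classical
  set anc : ℤ → ℤ := fun j => ⌊((2:ℝ)^k * m) / (2:ℝ)^j⌋ with hanc
  have hmem : ∀ j, (2:ℝ)^k * m ∈ E j (anc j) := fun j => mem_E_iff.mpr rfl
  have hself : (2:ℝ)^k * m ∈ E k m :=
    ⟨le_refl _, by nlinarith [two_zpow_pos k]⟩
  have hanck : anc k = m := by
    rw [hanc]
    simp only
    rw [mul_comm, mul_div_assoc, div_self (ne_of_gt (two_zpow_pos k)), mul_one, Int.floor_intCast]
  set T : Finset ℤ := (Finset.Icc k K).filter (fun j => Good f lam j (anc j)) with hT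
  have hkT : k ∈ T := by
    rw [hT, Finset.mem_filter, Finset.mem_Icc, hanck]
    exact ⟨⟨le_refl k, hk⟩, hg⟩
  have hTne : T.Nonempty := ⟨k, hkT⟩
  set j := T.max' hTne with hj
  have hjT : j ∈ T := T.max'_mem hTne
  rw [hT, Finset.mem_filter, Finset.mem_Icc] at hjT
  obtain ⟨⟨hkj, hjK⟩, hjg⟩ := hjT
  have hsub : E k m ⊆ E j (anc j) := E_subset hkj hself (hmem j)
  refine ⟨j, anc j, ⟨hjK, hjg, ?_⟩, hkj, hsub⟩
  intro k' m' hlt hle hsub' hg'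
  have hmem' : (2:ℝ)^k * m ∈ E k' m' := hsub' ((hsub hself))
  have : anc k' = m' := by
    have := mem_E_iff.mp hmem'
    rw [hanc]; simpa using this
  have hk'T : k' ∈ T := by
    rw [hT, Finset.mem_filter, Finset.mem_Icc, this]
    exact ⟨⟨le_trans hkj (le_of_lt hlt), hle⟩, hg'⟩
  have := T.le_max' k' hk'T
  omega

lemma maxG_disjoint {f : ℝ → ℝ} {lam : ℝ} {K : ℤ} {p q : ℤ × ℤ}
    (hp : MaxG f lam K p.1 p.2) (hq : MaxG f lam K q.1 q.2) (hne : p ≠ q) :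
    Disjoint (E p.1 p.2) (E q.1 q.2) := by
  by_contra hdis
  rw [Set.not_disjoint_iff] at hdis
  obtain ⟨x, hxp, hxq⟩ := hdis
  rcases lt_trichotomy p.1 q.1 with h | h | h
  · exact hp.2.2 q.1 q.2 h hq.1 (E_subset (le_of_lt h) hxp hxq) hq.2.1
  · apply hne
    have : p.2 = q.2 := by
      rw [mem_E_iff] at hxp hxq
      rw [← hxp, ← hxq, h]
    exact Prod.ext h this
  · exact hq.2.2 p.1 p.2 h hp.1 (E_subset (le_of_lt h) hxq hxp) hp.2.1

def Icc3 (k m : ℤ) : Set ℝ := Set.Icc ((2:ℝ)^k * (m-1)) ((2:ℝ)^k * (m+2))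

lemma integrableOn_E {g : ℝ → ℝ} (hg : LocallyIntegrable g volume) (k m : ℤ) :
    IntegrableOn g (E k m) volume :=
  (hg.integrableOn_isCompact isCompact_Icc).mono_set Set.Ico_subset_Icc_self

lemma integrableOn_Icc3 {g : ℝ → ℝ} (hg : LocallyIntegrable g volume) (k m : ℤ) :
    IntegrableOn g (Icc3 k m) volume :=
  hg.integrableOn_isCompact isCompact_Icc

lemma lint_eq_ofReal {g : ℝ → ℝ} (hg0 : ∀ x, 0 ≤ g x) {s : Set ℝ}
    (hgi : IntegrableOn g s volume) :
    (∫⁻ y in s, ENNReal.ofReal (g y)) = ENNReal.ofReal (∫ y in s, g y) :=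
  (ofReal_integral_eq_lintegral_ofReal hgi (Filter.Eventually.of_forall fun x => hg0 x)).symm

lemma lint_abs_eq {g : ℝ → ℝ} {s : Set ℝ} (hgi : IntegrableOn g s volume) :
    ENNReal.ofReal (∫ y in s, |g y|) = ∫⁻ y in s, (‖g y‖₊ : ℝ≥0∞) := by
  rw [ofReal_integral_eq_lintegral_ofReal hgi.abs
    (Filter.Eventually.of_forall fun x => abs_nonneg _)]
  congr 1
  ext y
  exact (Real.enorm_eq_ofReal_abs _).symm

lemma cancel {X Y : ℝ≥0∞} {lam t c : ℝ} (hl : 0 < lam) (ht : 0 < t) (hc : 0 ≤ c)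
    (h : X * ENNReal.ofReal (lam * t) ≤ ENNReal.ofReal (c * t) * Y) :
    X ≤ ENNReal.ofReal c * (ENNReal.ofReal lam)⁻¹ * Y := by
  rw [ENNReal.ofReal_mul (le_of_lt hl), ENNReal.ofReal_mul hc, ← mul_assoc,
    mul_comm (ENNReal.ofReal c) (ENNReal.ofReal t), mul_assoc] at h
  have hT0 : ENNReal.ofReal t ≠ 0 := by simp [ENNReal.ofReal_eq_zero]; linarith
  have h2 : X * ENNReal.ofReal lam ≤ ENNReal.ofReal c * Y := by
    rw [← ENNReal.mul_le_mul_iff_right hT0 ENNReal.ofReal_ne_top]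
    calc ENNReal.ofReal t * (X * ENNReal.ofReal lam)
        = X * (ENNReal.ofReal lam * ENNReal.ofReal t) := by ring
      _ ≤ ENNReal.ofReal t * ENNReal.ofReal c * Y := h
      _ = ENNReal.ofReal t * (ENNReal.ofReal c * Y) := mul_assoc _ _ _
  have hL0 : ENNReal.ofReal lam ≠ 0 := by simp [ENNReal.ofReal_eq_zero]; linarith
  have := (ENNReal.le_div_iff_mul_le (Or.inl hL0) (Or.inl ENNReal.ofReal_ne_top)).mpr h2
  rwa [ENNReal.div_eq_inv_mul, ← mul_assoc, mul_comm (ENNReal.ofReal lam)⁻¹] at this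

lemma shiftedMaximal_ge {n' k m : ℤ} (g : ℝ → ℝ) {y : ℝ} (hy : y ∈ E k m) :
    ENNReal.ofReal (((2:ℝ)^k)⁻¹ * ∫ z in E k (m - n'), |g z|) ≤ shiftedMaximal n' g y := by
  have hset : E k (m - n') = Set.Ico ((2:ℝ)^k * ((m:ℝ) - (n':ℝ)))
      ((2:ℝ)^k * ((m:ℝ) - (n':ℝ) + 1)) := by
    unfold E; push_cast; ring_nf
  rw [shiftedMaximal]
  refine le_iSup_of_le k (le_iSup_of_le m (le_iSup_of_le hy ?_))
  rw [hset]

lemma hlMaximal_ge {a b : ℝ} (g : ℝ → ℝ) {y : ℝ} (ha : a ≤ y) (hb : y ≤ b) (hab : a < b) :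
    ENNReal.ofReal ((b - a)⁻¹ * ∫ z in Set.Icc a b, |g z|) ≤ hlMaximal g y := by
  rw [hlMaximal]
  exact le_iSup_of_le a (le_iSup_of_le b (le_iSup_of_le ha (le_iSup_of_le hb
    (le_iSup_of_le hab (le_refl _)))))

section Estimates

variable {f ω : ℝ → ℝ} {lam : ℝ} {n : ℤ}
variable (hω0 : ∀ x, 0 ≤ ω x) (hω : LocallyIntegrable ω volume)
variable (hf : LocallyIntegrable f volume) (hlam : 0 < lam)

include hω0 hω hf hlam

/-- the "far" estimate -/
lemma far_estimate (k m : ℤ) (hg : Good f lam k (m - n)) :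
    (∫⁻ y in E k m, ENNReal.ofReal (ω y)) ≤
      ENNReal.ofReal 1 * (ENNReal.ofReal lam)⁻¹ *
        ∫⁻ y in E k (m - n), (‖f y‖₊ : ℝ≥0∞) * shiftedMaximal (-n) ω y := by
  have hp := two_zpow_pos k
  have hωi := integrableOn_E hω k m
  set W := ENNReal.ofReal (∫ y in E k m, ω y) with hWdef
  have hW : (∫⁻ y in E k m, ENNReal.ofReal (ω y)) = W := lint_eq_ofReal hω0 hωi
  have hWtop : W ≠ ∞ := ENNReal.ofReal_ne_top
  have hptwise : ∀ y ∈ E k (m - n), W ≤ ENNReal.ofReal ((2:ℝ)^k) * shiftedMaximal (-n) ω y := by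
    intro y hy
    have h1 := shiftedMaximal_ge (n' := -n) (k := k) (m := m - n) ω hy
    have hidx : m - n - (-n) = m := by ring
    rw [hidx] at h1
    have habs : (∫ z in E k m, |ω z|) = ∫ z in E k m, ω z := by
      congr 1; ext z; exact abs_of_nonneg (hω0 z)
    calc W = ENNReal.ofReal ((2:ℝ)^k) * ENNReal.ofReal (((2:ℝ)^k)⁻¹ * ∫ z in E k m, |ω z|) := by
          rw [← ENNReal.ofReal_mul (le_of_lt hp), habs, hWdef]
          congr 1
          field_simp
      _ ≤ ENNReal.ofReal ((2:ℝ)^k) * shiftedMaximal (-n) ω y := mul_le_mul_right h1 _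
  have hGood : ENNReal.ofReal (lam * (2:ℝ)^k) ≤ ∫⁻ y in E k (m - n), (‖f y‖₊ : ℝ≥0∞) := by
    rw [← lint_abs_eq (integrableOn_E hf k (m - n))]
    exact ENNReal.ofReal_le_ofReal (le_of_lt hg)
  have hmeas : MeasurableSet (E k (m - n)) := measurableSet_Ico
  have chain : W * ENNReal.ofReal (lam * (2:ℝ)^k) ≤
      ENNReal.ofReal (1 * (2:ℝ)^k) *
        ∫⁻ y in E k (m - n), (‖f y‖₊ : ℝ≥0∞) * shiftedMaximal (-n) ω y := by
    calc W * ENNReal.ofReal (lam * (2:ℝ)^k)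
        ≤ W * ∫⁻ y in E k (m - n), (‖f y‖₊ : ℝ≥0∞) := mul_le_mul_right hGood W
      _ = ∫⁻ y in E k (m - n), W * (‖f y‖₊ : ℝ≥0∞) := (lintegral_const_mul' W _ hWtop).symm
      _ ≤ ∫⁻ y in E k (m - n), ENNReal.ofReal ((2:ℝ)^k) *
            ((‖f y‖₊ : ℝ≥0∞) * shiftedMaximal (-n) ω y) := by
          refine setLIntegral_mono' hmeas fun y hy => ?_
          calc W * (‖f y‖₊ : ℝ≥0∞)
              ≤ (ENNReal.ofReal ((2:ℝ)^k) * shiftedMaximal (-n) ω y) * (‖f y‖₊ : ℝ≥0∞) :=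
                mul_le_mul_left (hptwise y hy) _
            _ = ENNReal.ofReal ((2:ℝ)^k) * ((‖f y‖₊ : ℝ≥0∞) * shiftedMaximal (-n) ω y) := by ring
      _ = ENNReal.ofReal ((2:ℝ)^k) *
            ∫⁻ y in E k (m - n), (‖f y‖₊ : ℝ≥0∞) * shiftedMaximal (-n) ω y :=
          lintegral_const_mul' _ _ ENNReal.ofReal_ne_top
      _ = ENNReal.ofReal (1 * (2:ℝ)^k) *
            ∫⁻ y in E k (m - n), (‖f y‖₊ : ℝ≥0∞) * shiftedMaximal (-n) ω y := by rw [one_mul]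
  rw [hW]
  exact cancel hlam hp (by norm_num) chain

/-- the "close" estimate -/
lemma close_estimate (k m : ℤ) (hg : Good f lam k m) :
    (∫⁻ y in Icc3 k m, ENNReal.ofReal (ω y)) ≤
      ENNReal.ofReal 3 * (ENNReal.ofReal lam)⁻¹ *
        ∫⁻ y in E k m, (‖f y‖₊ : ℝ≥0∞) * hlMaximal ω y := by
  have hp := two_zpow_pos k
  have hωi := integrableOn_Icc3 hω k m
  set a := (2:ℝ)^k * ((m:ℝ)-1) with hadef
  set b := (2:ℝ)^k * ((m:ℝ)+2) with hbdef
  have hab : a < b := by rw [hadef, hbdef]; nlinarith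
  have hba : b - a = 3 * (2:ℝ)^k := by rw [hadef, hbdef]; ring
  set W := ENNReal.ofReal (∫ y in Icc3 k m, ω y) with hWdef
  have hW : (∫⁻ y in Icc3 k m, ENNReal.ofReal (ω y)) = W := lint_eq_ofReal hω0 hωi
  have hWtop : W ≠ ∞ := ENNReal.ofReal_ne_top
  have hptwise : ∀ y ∈ E k m, W ≤ ENNReal.ofReal (3 * (2:ℝ)^k) * hlMaximal ω y := by
    intro y hy
    obtain ⟨hy1, hy2⟩ := hy
    have hay : a ≤ y := by rw [hadef]; nlinarith
    have hyb : y ≤ b := by rw [hbdef]; nlinarith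
    have h1 := hlMaximal_ge ω hay hyb hab
    have habs : (∫ z in Set.Icc a b, |ω z|) = ∫ z in Icc3 k m, ω z := by
      rw [show Set.Icc a b = Icc3 k m from rfl]
      congr 1; ext z; exact abs_of_nonneg (hω0 z)
    calc W = ENNReal.ofReal (3 * (2:ℝ)^k) *
          ENNReal.ofReal ((b - a)⁻¹ * ∫ z in Set.Icc a b, |ω z|) := by
          rw [← ENNReal.ofReal_mul (by positivity), habs, hWdef, hba]
          congr 1
          field_simp
      _ ≤ ENNReal.ofReal (3 * (2:ℝ)^k) * hlMaximal ω y := mul_le_mul_right h1 _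
  have hGood : ENNReal.ofReal (lam * (2:ℝ)^k) ≤ ∫⁻ y in E k m, (‖f y‖₊ : ℝ≥0∞) := by
    rw [← lint_abs_eq (integrableOn_E hf k m)]
    exact ENNReal.ofReal_le_ofReal (le_of_lt hg)
  have hmeas : MeasurableSet (E k m) := measurableSet_Ico
  have chain : W * ENNReal.ofReal (lam * (2:ℝ)^k) ≤
      ENNReal.ofReal (3 * (2:ℝ)^k) *
        ∫⁻ y in E k m, (‖f y‖₊ : ℝ≥0∞) * hlMaximal ω y := by
    calc W * ENNReal.ofReal (lam * (2:ℝ)^k)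
        ≤ W * ∫⁻ y in E k m, (‖f y‖₊ : ℝ≥0∞) := mul_le_mul_right hGood W
      _ = ∫⁻ y in E k m, W * (‖f y‖₊ : ℝ≥0∞) := (lintegral_const_mul' W _ hWtop).symm
      _ ≤ ∫⁻ y in E k m, ENNReal.ofReal (3 * (2:ℝ)^k) *
            ((‖f y‖₊ : ℝ≥0∞) * hlMaximal ω y) := by
          refine setLIntegral_mono' hmeas fun y hy => ?_
          calc W * (‖f y‖₊ : ℝ≥0∞)
              ≤ (ENNReal.ofReal (3 * (2:ℝ)^k) * hlMaximal ω y) * (‖f y‖₊ : ℝ≥0∞) :=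
                mul_le_mul_left (hptwise y hy) _
            _ = ENNReal.ofReal (3 * (2:ℝ)^k) * ((‖f y‖₊ : ℝ≥0∞) * hlMaximal ω y) := by ring
      _ = ENNReal.ofReal (3 * (2:ℝ)^k) *
            ∫⁻ y in E k m, (‖f y‖₊ : ℝ≥0∞) * hlMaximal ω y :=
          lintegral_const_mul' _ _ ENNReal.ofReal_ne_top
  rw [hW]
  exact cancel hlam hp (by norm_num) chain

/-- index set of "far" intervals at scale `k` attached to the maximal interval `E p1 p2` -/
def FIdx (f : ℝ → ℝ) (lam : ℝ) (n k p1 p2 : ℤ) : Set ℤ :=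
  {m | Good f lam k (m - n) ∧ E k (m - n) ⊆ E p1 p2}

def U (f : ℝ → ℝ) (lam : ℝ) (n k p1 p2 : ℤ) : Set ℝ :=
  ⋃ m ∈ FIdx f lam n k p1 p2, E k m

lemma U_estimate (k p1 p2 : ℤ) :
    (∫⁻ y in U f lam n k p1 p2, ENNReal.ofReal (ω y)) ≤
      ENNReal.ofReal 1 * (ENNReal.ofReal lam)⁻¹ *
        ∫⁻ y in E p1 p2, (‖f y‖₊ : ℝ≥0∞) * shiftedMaximal (-n) ω y := by
  set c := ENNReal.ofReal 1 * (ENNReal.ofReal lam)⁻¹ with hc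
  set g := fun y => (‖f y‖₊ : ℝ≥0∞) * shiftedMaximal (-n) ω y with hg
  have h1 : (∫⁻ y in U f lam n k p1 p2, ENNReal.ofReal (ω y)) ≤
      ∑' (m : FIdx f lam n k p1 p2), ∫⁻ y in E k m, ENNReal.ofReal (ω y) := by
    rw [U, Set.biUnion_eq_iUnion]
    exact lintegral_iUnion_le _ _
  have h2 : ∀ (m : FIdx f lam n k p1 p2),
      (∫⁻ y in E k (m : ℤ), ENNReal.ofReal (ω y)) ≤ c * ∫⁻ y in E k ((m : ℤ) - n), g y :=
    fun m => far_estimate hω0 hω hf hlam k m m.2.1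
  have h3 : ∑' (m : FIdx f lam n k p1 p2), (∫⁻ y in E k ((m : ℤ) - n), g y) ≤
      ∫⁻ y in E p1 p2, g y := by
    have heq : ∑' (m : FIdx f lam n k p1 p2), (∫⁻ y in E k ((m : ℤ) - n), g y) =
        ∫⁻ y in ⋃ (m : FIdx f lam n k p1 p2), E k ((m : ℤ) - n), g y := by
      refine (lintegral_iUnion (fun _ => measurableSet_Ico) ?_ _).symm
      intro i j hij
      refine E_disjoint ?_
      intro hc'
      exact hij (Subtype.ext (by omega))
    rw [heq]
    refine lintegral_mono_set ?_
    exact Set.iUnion_subset fun m => m.2.2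
  calc (∫⁻ y in U f lam n k p1 p2, ENNReal.ofReal (ω y))
      ≤ ∑' (m : FIdx f lam n k p1 p2), ∫⁻ y in E k (m : ℤ), ENNReal.ofReal (ω y) := h1
    _ ≤ ∑' (m : FIdx f lam n k p1 p2), c * ∫⁻ y in E k ((m : ℤ) - n), g y := Summable.tsum_le_tsum h2 ENNReal.summable ENNReal.summable
    _ = c * ∑' (m : FIdx f lam n k p1 p2), ∫⁻ y in E k ((m : ℤ) - n), g y := ENNReal.tsum_mul_left
    _ ≤ c * ∫⁻ y in E p1 p2, g y := mul_le_mul_right h3 c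

end Estimates

def Dn (n : ℤ) : ℕ := Nat.log 2 n.natAbs + 1

def OmegaSet (f : ℝ → ℝ) (lam : ℝ) (n K : ℤ) : Set ℝ :=
  ⋃ (p : ℤ × ℤ) (_ : p.1 ≤ K ∧ Good f lam p.1 (p.2 - n)), E p.1 p.2

def MJ (f : ℝ → ℝ) (lam : ℝ) (K : ℤ) : Set (ℤ × ℤ) := {p | MaxG f lam K p.1 p.2}

def T (f : ℝ → ℝ) (lam : ℝ) (n : ℤ) (p : ℤ × ℤ) : Set ℝ :=
  Icc3 p.1 p.2 ∪ ⋃ d ∈ Finset.range (Dn n), U f lam n (p.1 - d) p.1 p.2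

lemma cover {f : ℝ → ℝ} {lam : ℝ} {n K : ℤ} :
    OmegaSet f lam n K ⊆ ⋃ p ∈ MJ f lam K, T f lam n p := by
  intro x hx
  simp only [OmegaSet, Set.mem_iUnion] at hx
  obtain ⟨⟨k, m⟩, ⟨hkK, hgood⟩, hxE⟩ := hx
  obtain ⟨k', m', hmax, hkk', hsub⟩ := exists_max hkK hgood
  have hp := two_zpow_pos k
  have hp' := two_zpow_pos k'
  -- endpoint inequalities from `hsub`
  have hend := (Set.Ico_subset_Ico_iff (E_nonempty k (m - n))).mp hsub
  obtain ⟨hend1, hend2⟩ := hend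
  have hN : ((n.natAbs : ℤ) : ℝ) = |((n : ℤ) : ℝ)| := by
    rw [Int.natCast_natAbs, Int.cast_abs]
  set N : ℝ := ((n.natAbs : ℤ) : ℝ) with hNdef
  have hNn : -(n : ℝ) ≤ N := by rw [hN]; exact neg_le_abs _
  have hNn' : (n : ℝ) ≤ N := by rw [hN]; exact le_abs_self _
  simp only [Set.mem_iUnion]
  refine ⟨(k', m'), hmax, ?_⟩
  rw [T]
  by_cases hfar : (2:ℝ)^k' < N * (2:ℝ)^k
  · -- far case
    right
    have hd : ∃ d : ℕ, k' = k + d := ⟨(k' - k).toNat, by omega⟩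
    obtain ⟨d, hdeq⟩ := hd
    have h2 : (2:ℝ)^k' = (2:ℝ)^k * (2:ℝ)^(d:ℕ) := by
      rw [hdeq, zpow_add₀ (by norm_num : (2:ℝ) ≠ 0), zpow_natCast]
    have hdlt : (2:ℝ)^(d:ℕ) < N := by
      rw [h2] at hfar; nlinarith
    have hna : 2^d < n.natAbs := by
      have : ((2^d : ℕ) : ℝ) < ((n.natAbs : ℕ) : ℝ) := by push_cast at hdlt ⊢; exact hdlt
      exact_mod_cast this
    have hdD : d ∈ Finset.range (Dn n) := by
      rw [Finset.mem_range, Dn]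
      have hna0 : n.natAbs ≠ 0 := (lt_of_le_of_lt (Nat.zero_le _) hna).ne'
      have hlog : d ≤ Nat.log 2 n.natAbs := (Nat.le_log_iff_pow_le (by norm_num) hna0).mpr hna.le
      omega
    simp only [Set.mem_iUnion]
    refine ⟨d, hdD, ?_⟩
    rw [U]
    simp only [Set.mem_iUnion]
    have hk : k' - d = k := by omega
    refine ⟨m, ?_, ?_⟩
    · rw [FIdx, Set.mem_setOf_eq, hk]
      exact ⟨hgood, hsub⟩
    · rw [hk]; exact hxE
  · -- close case
    left
    push_neg at hfar
    obtain ⟨hx1, hx2⟩ := hxE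
    rw [Icc3]
    have hcast1 : ((m - n : ℤ) : ℝ) = (m : ℝ) - (n : ℝ) := by push_cast; ring
    rw [hcast1] at hend1 hend2
    have e1 : N * (2:ℝ)^k ≤ (2:ℝ)^k' := hfar
    have e2 : (-(n:ℝ)) * (2:ℝ)^k ≤ N * (2:ℝ)^k := mul_le_mul_of_nonneg_right hNn hp.le
    have e3 : ((n:ℝ)) * (2:ℝ)^k ≤ N * (2:ℝ)^k := mul_le_mul_of_nonneg_right hNn' hp.le
    constructor
    · -- 2^k' * (m' - 1) ≤ x
      have : (2:ℝ)^k' * ((m':ℝ) - 1) ≤ (2:ℝ)^k * (m:ℝ) := by nlinarith [hend1, e1, e2]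
      push_cast
      linarith
    · -- x ≤ 2^k' * (m' + 2)
      have : (2:ℝ)^k * ((m:ℝ) + 1) ≤ (2:ℝ)^k' * ((m':ℝ) + 2) := by nlinarith [hend2, e1, e3]
      push_cast
      linarith

end


lemma lint_finset_le {ι : Type*} (s : Finset ι) (t : ι → Set ℝ) (g : ℝ → ℝ≥0∞) :
    (∫⁻ y in ⋃ i ∈ s, t i, g y) ≤ ∑ i ∈ s, ∫⁻ y in t i, g y := by
  classical
  induction s using Finset.induction with
  | empty => simp
  | insert a s h ih =>
    rw [Finset.set_biUnion_insert, Finset.sum_insert h]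
    exact le_trans (lintegral_union_le _ _ _) (add_le_add le_rfl ih)

section Assembly

variable {f ω : ℝ → ℝ} {lam : ℝ} {n : ℤ}
variable (hω0 : ∀ x, 0 ≤ ω x) (hω : LocallyIntegrable ω volume)
variable (hf : LocallyIntegrable f volume) (hlam : 0 < lam)

include hω0 hω hf hlam

omit hω0 hω hf hlam in
lemma sum_maxG_le {K : ℤ} (g : ℝ → ℝ≥0∞) :
    ∑' (p : MJ f lam K), (∫⁻ y in E (p : ℤ × ℤ).1 (p : ℤ × ℤ).2, g y) ≤ ∫⁻ y, g y := by
  have heq : ∑' (p : MJ f lam K), (∫⁻ y in E (p : ℤ × ℤ).1 (p : ℤ × ℤ).2, g y) =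
      ∫⁻ y in ⋃ (p : MJ f lam K), E (p : ℤ × ℤ).1 (p : ℤ × ℤ).2, g y := by
    refine (lintegral_iUnion (fun _ => measurableSet_Ico) ?_ _).symm
    intro i j hij
    exact maxG_disjoint i.2 j.2 (fun hc => hij (Subtype.ext hc))
  rw [heq]
  exact setLIntegral_le_lintegral _ _

lemma omegaK_bound (K : ℤ) :
    (∫⁻ y in OmegaSet f lam n K, ENNReal.ofReal (ω y)) ≤
      ENNReal.ofReal 3 * (ENNReal.ofReal lam)⁻¹ *
          (∫⁻ y, (‖f y‖₊ : ℝ≥0∞) * hlMaximal ω y) +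
        (Dn n : ℝ≥0∞) * (ENNReal.ofReal 1 * (ENNReal.ofReal lam)⁻¹) *
          (∫⁻ y, (‖f y‖₊ : ℝ≥0∞) * shiftedMaximal (-n) ω y) := by
  set g1 := fun y => (‖f y‖₊ : ℝ≥0∞) * shiftedMaximal (-n) ω y with hg1
  set g2 := fun y => (‖f y‖₊ : ℝ≥0∞) * hlMaximal ω y with hg2
  set c2 := ENNReal.ofReal 3 * (ENNReal.ofReal lam)⁻¹ with hc2
  set c1 := ENNReal.ofReal 1 * (ENNReal.ofReal lam)⁻¹ with hc1
  have hTp : ∀ p : MJ f lam K, (∫⁻ y in T f lam n (p : ℤ × ℤ), ENNReal.ofReal (ω y)) ≤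
      c2 * (∫⁻ y in E (p : ℤ × ℤ).1 (p : ℤ × ℤ).2, g2 y) +
        (Dn n : ℝ≥0∞) * c1 * (∫⁻ y in E (p : ℤ × ℤ).1 (p : ℤ × ℤ).2, g1 y) := by
    rintro ⟨⟨k', m'⟩, hpmem⟩
    have hgood : Good f lam k' m' := hpmem.2.1
    calc (∫⁻ y in T f lam n (k', m'), ENNReal.ofReal (ω y))
        ≤ (∫⁻ y in Icc3 k' m', ENNReal.ofReal (ω y)) +
            ∫⁻ y in ⋃ d ∈ Finset.range (Dn n), U f lam n (k' - d) k' m', ENNReal.ofReal (ω y) :=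
          lintegral_union_le _ _ _
      _ ≤ c2 * (∫⁻ y in E k' m', g2 y) +
            ∑ d ∈ Finset.range (Dn n), ∫⁻ y in U f lam n (k' - d) k' m', ENNReal.ofReal (ω y) := by
          refine add_le_add (close_estimate hω0 hω hf hlam k' m' hgood) (lint_finset_le _ _ _)
      _ ≤ c2 * (∫⁻ y in E k' m', g2 y) +
            (Finset.range (Dn n)).card • (c1 * ∫⁻ y in E k' m', g1 y) := by
          refine add_le_add le_rfl (Finset.sum_le_card_nsmul _ _ _ ?_)
          intro d _
          exact U_estimate hω0 hω hf hlam (k' - d) k' m'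
      _ = c2 * (∫⁻ y in E k' m', g2 y) + (Dn n : ℝ≥0∞) * c1 * (∫⁻ y in E k' m', g1 y) := by
          rw [Finset.card_range, nsmul_eq_mul]; ring
  calc (∫⁻ y in OmegaSet f lam n K, ENNReal.ofReal (ω y))
      ≤ ∫⁻ y in ⋃ p ∈ MJ f lam K, T f lam n p, ENNReal.ofReal (ω y) :=
        lintegral_mono_set cover
    _ = ∫⁻ y in ⋃ (p : MJ f lam K), T f lam n (p : ℤ × ℤ), ENNReal.ofReal (ω y) := by
        rw [Set.biUnion_eq_iUnion]
    _ ≤ ∑' (p : MJ f lam K), ∫⁻ y in T f lam n (p : ℤ × ℤ), ENNReal.ofReal (ω y) :=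
        lintegral_iUnion_le _ _
    _ ≤ ∑' (p : MJ f lam K), (c2 * (∫⁻ y in E (p : ℤ × ℤ).1 (p : ℤ × ℤ).2, g2 y) +
          (Dn n : ℝ≥0∞) * c1 * (∫⁻ y in E (p : ℤ × ℤ).1 (p : ℤ × ℤ).2, g1 y)) :=
        Summable.tsum_le_tsum hTp ENNReal.summable ENNReal.summable
    _ = c2 * (∑' (p : MJ f lam K), ∫⁻ y in E (p : ℤ × ℤ).1 (p : ℤ × ℤ).2, g2 y) +
          (Dn n : ℝ≥0∞) * c1 * (∑' (p : MJ f lam K), ∫⁻ y in E (p : ℤ × ℤ).1 (p : ℤ × ℤ).2, g1 y) := by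
        rw [ENNReal.tsum_add, ENNReal.tsum_mul_left, ENNReal.tsum_mul_left]
    _ ≤ c2 * (∫⁻ y, g2 y) + (Dn n : ℝ≥0∞) * c1 * (∫⁻ y, g1 y) :=
        add_le_add (mul_le_mul_right (sum_maxG_le g2) _)
          (mul_le_mul_right (sum_maxG_le g1) _)

end Assembly

section Final

variable {f ω : ℝ → ℝ} {lam : ℝ} {n : ℤ}

lemma E_shift_eq (k m n : ℤ) : E k (m - n) =
    Set.Ico ((2:ℝ)^k * ((m:ℝ) - (n:ℝ))) ((2:ℝ)^k * ((m:ℝ) - (n:ℝ) + 1)) := by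
  unfold E; push_cast; ring_nf

lemma mem_omega_iff (hlam : 0 < lam) {x : ℝ} :
    ENNReal.ofReal lam < shiftedMaximal n f x ↔
      ∃ p : ℤ × ℤ, Good f lam p.1 (p.2 - n) ∧ x ∈ E p.1 p.2 := by
  constructor
  · intro h
    rw [shiftedMaximal, lt_iSup_iff] at h
    obtain ⟨k, h⟩ := h
    rw [lt_iSup_iff] at h
    obtain ⟨m, h⟩ := h
    rw [lt_iSup_iff] at h
    obtain ⟨hmem, h⟩ := h
    have hp := two_zpow_pos k
    refine ⟨(k, m), ?_, hmem⟩
    have hlt := (ENNReal.ofReal_lt_ofReal_iff_of_nonneg hlam.le).mp h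
    rw [Good, E_shift_eq]
    have h2 := mul_lt_mul_of_pos_right hlt hp
    calc lam * (2:ℝ)^k < ((2:ℝ)^k)⁻¹ *
        (∫ y in Set.Ico ((2:ℝ)^k * ((m:ℝ) - (n:ℝ))) ((2:ℝ)^k * ((m:ℝ) - (n:ℝ) + 1)), |f y|) *
          (2:ℝ)^k := h2
      _ = ∫ y in Set.Ico ((2:ℝ)^k * ((m:ℝ) - (n:ℝ))) ((2:ℝ)^k * ((m:ℝ) - (n:ℝ) + 1)), |f y| := by
          field_simp
  · rintro ⟨⟨k, m⟩, hgood, hmem⟩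
    rw [Good, E_shift_eq] at hgood
    have hp := two_zpow_pos k
    have hlt : lam < ((2:ℝ)^k)⁻¹ *
        ∫ y in Set.Ico ((2:ℝ)^k * ((m:ℝ) - (n:ℝ))) ((2:ℝ)^k * ((m:ℝ) - (n:ℝ) + 1)), |f y| := by
      rw [inv_mul_eq_div, lt_div_iff₀ hp]
      exact hgood
    refine lt_of_lt_of_le ((ENNReal.ofReal_lt_ofReal_iff (lt_trans hlam hlt)).mpr hlt) ?_
    rw [shiftedMaximal]
    exact le_iSup_of_le k (le_iSup_of_le m (le_iSup_of_le hmem le_rfl))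

lemma omega_eq (hlam : 0 < lam) :
    {x : ℝ | ENNReal.ofReal lam < shiftedMaximal n f x} = ⋃ (K : ℕ), OmegaSet f lam n K := by
  ext x
  rw [Set.mem_setOf_eq, mem_omega_iff hlam]
  constructor
  · rintro ⟨⟨k, m⟩, hgood, hmem⟩
    refine Set.mem_iUnion.mpr ⟨k.toNat, ?_⟩
    rw [OmegaSet]
    simp only [Set.mem_iUnion]
    exact ⟨(k, m), ⟨Int.self_le_toNat k, hgood⟩, hmem⟩
  · intro hx
    obtain ⟨K, hx⟩ := Set.mem_iUnion.mp hx
    rw [OmegaSet] at hx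
    simp only [Set.mem_iUnion] at hx
    obtain ⟨p, ⟨_, hgood⟩, hmem⟩ := hx
    exact ⟨p, hgood, hmem⟩

lemma omegaSet_measurable (K : ℤ) : MeasurableSet (OmegaSet f lam n K) := by
  rw [OmegaSet]
  exact MeasurableSet.iUnion fun p => MeasurableSet.iUnion fun _ => measurableSet_Ico

lemma dn_log_bound : (Dn n : ℝ≥0∞) ≤
    ENNReal.ofReal 30 * ENNReal.ofReal (Real.log (2 + |(n : ℝ)|)) := by
  rw [← ENNReal.ofReal_natCast, ← ENNReal.ofReal_mul (by norm_num)]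
  refine ENNReal.ofReal_le_ofReal ?_
  set na := n.natAbs with hna
  have hNa : |(n : ℝ)| = (na : ℝ) := by rw [hna, Nat.cast_natAbs, Int.cast_abs]
  rw [hNa, Dn]
  have hpow : ((2:ℕ))^(Nat.log 2 na) ≤ 2 + na := by
    rcases Nat.eq_zero_or_pos na with h | h
    · simp [h]
    · exact le_trans (Nat.pow_log_le_self 2 h.ne') (by omega)
  have hpowR : ((2:ℝ))^(Nat.log 2 na) ≤ 2 + (na : ℝ) := by exact_mod_cast hpow
  have hlog1 : (Nat.log 2 na : ℝ) * Real.log 2 ≤ Real.log (2 + (na : ℝ)) := by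
    rw [← Real.log_pow]
    exact Real.log_le_log (by positivity) hpowR
  have h0na : (0:ℝ) ≤ (na : ℝ) := Nat.cast_nonneg na
  have hlog2 : Real.log 2 ≤ Real.log (2 + (na : ℝ)) :=
    Real.log_le_log (by norm_num) (by linarith)
  have hl2 := Real.log_two_gt_d9
  have hlogpos : 0 ≤ Real.log (2 + (na : ℝ)) := Real.log_nonneg (by linarith)
  push_cast
  nlinarith [hlog1, hlog2, hl2, hlogpos]

end Final

end S11

/-- Fefferman–Stein type weighted weak-(1,1) estimate for the shifted
dyadic maximal operator: there is an absolute constant `C` such that for every `n ∈ ℤ`,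
every locally integrable weight `ω ≥ 0`, every `f ∈ L¹_loc` and every `λ > 0`,
`ω({M^{(n)}f > λ}) ≤ C λ⁻¹ (log⟨n⟩ ∫|f| M^{(−n)}ω + ∫|f| Mω)`, with `⟨n⟩ = 2 + |n|`. -/
theorem statement11 :
    ∃ C : ℝ, 0 < C ∧
      ∀ (n : ℤ) (ω : ℝ → ℝ), (∀ x, 0 ≤ ω x) → LocallyIntegrable ω volume →
        ∀ f : ℝ → ℝ, LocallyIntegrable f volume →
          ∀ lam : ℝ, 0 < lam →
            (∫⁻ x in {x : ℝ | ENNReal.ofReal lam < shiftedMaximal n f x},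
                ENNReal.ofReal (ω x)) ≤
              ENNReal.ofReal (C / lam) *
                (ENNReal.ofReal (Real.log (2 + |(n : ℝ)|)) *
                    (∫⁻ x : ℝ, (‖f x‖₊ : ℝ≥0∞) * shiftedMaximal (-n) ω x) +
                  ∫⁻ x : ℝ, (‖f x‖₊ : ℝ≥0∞) * hlMaximal ω x) := by
  refine ⟨30, by norm_num, ?_⟩
  intro n ω hω0 hω f hf lam hlam
  set A := ∫⁻ x : ℝ, (‖f x‖₊ : ℝ≥0∞) * shiftedMaximal (-n) ω x with hA
  set B := ∫⁻ x : ℝ, (‖f x‖₊ : ℝ≥0∞) * hlMaximal ω x with hB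
  set L := ENNReal.ofReal (Real.log (2 + |(n : ℝ)|)) with hL
  set ν := volume.withDensity (fun x => ENNReal.ofReal (ω x)) with hν
  have hΩmeas : MeasurableSet {x : ℝ | ENNReal.ofReal lam < shiftedMaximal n f x} := by
    rw [S11.omega_eq hlam]
    exact MeasurableSet.iUnion fun K => S11.omegaSet_measurable K
  have hLHS : (∫⁻ x in {x : ℝ | ENNReal.ofReal lam < shiftedMaximal n f x},
      ENNReal.ofReal (ω x)) = ν {x : ℝ | ENNReal.ofReal lam < shiftedMaximal n f x} :=
    (withDensity_apply _ hΩmeas).symm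
  rw [hLHS, S11.omega_eq hlam]
  have hmono : Monotone (fun K : ℕ => S11.OmegaSet f lam n K) := by
    intro K K' hKK'
    simp only [S11.OmegaSet]
    refine Set.iUnion_mono fun p => Set.iUnion_subset fun hp => ?_
    refine Set.subset_iUnion_of_subset ⟨le_trans hp.1 (by exact_mod_cast hKK'), hp.2⟩ le_rfl
  rw [Directed.measure_iUnion (hmono.directed_le)]
  refine iSup_le fun K => ?_
  rw [hν, withDensity_apply _ (S11.omegaSet_measurable (K : ℤ))]
  refine le_trans (S11.omegaK_bound hω0 hω hf hlam (K : ℤ)) ?_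
  -- constant comparison
  rw [ENNReal.ofReal_div_of_pos hlam, ENNReal.div_eq_inv_mul]
  have hc1 : ENNReal.ofReal 1 * (ENNReal.ofReal lam)⁻¹ = (ENNReal.ofReal lam)⁻¹ := by
    rw [ENNReal.ofReal_one, one_mul]
  rw [hc1]
  have key := S11.dn_log_bound (n := n)
  calc ENNReal.ofReal 3 * (ENNReal.ofReal lam)⁻¹ * B + (S11.Dn n : ℝ≥0∞) * (ENNReal.ofReal lam)⁻¹ * A
      ≤ ENNReal.ofReal 30 * (ENNReal.ofReal lam)⁻¹ * B +
        (ENNReal.ofReal 30 * L) * ((ENNReal.ofReal lam)⁻¹ * A) := by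
        refine add_le_add ?_ ?_
        · exact mul_le_mul_left (mul_le_mul_left (ENNReal.ofReal_le_ofReal (by norm_num)) _) _
        · rw [mul_assoc]
          exact mul_le_mul_left key _
    _ = (ENNReal.ofReal lam)⁻¹ * ENNReal.ofReal 30 * (L * A + B) := by ring
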